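/- arXiv:2108.07940 — 2 statements merged into one kernel-verified Lean document; each statement's English description precedes it below -/
import Mathlib

section
/- Let a > 0 and s > 0 be real numbers, and define f(β) = Φ((−a+β)/s) + Φ((−a−β)/s), where Φ is the standard normal CDF. Then f is strictly increasing on (0, ∞) and strictly decreasing on (−∞, 0); consequently f attains its unique global minimum at β = 0. -/
noncomputable def stdNormalCDF (x : ℝ) : ℝ :=
  ∫ t in Set.Iic x, Real.exp (-t ^ 2 / 2) / Real.sqrt (2 * Real.pi)

noncomputable def gaussDens (t : ℝ) : ℝ := Real.exp (-t ^ 2 / 2) / Real.sqrt (2 * Real.pi)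

lemma gaussDens_cont : Continuous gaussDens := by
  unfold gaussDens
  fun_prop

lemma gaussDens_integrable : MeasureTheory.Integrable gaussDens := by
  have h := (integrable_exp_neg_mul_sq (by norm_num : (0:ℝ) < 1/2)).div_const
    (Real.sqrt (2 * Real.pi))
  have heq : gaussDens = fun x => Real.exp (-(1/2) * x ^ 2) / Real.sqrt (2 * Real.pi) := by
    funext t; unfold gaussDens; ring_nf
  rw [heq]; exact h

lemma hasDerivAt_cdf (x : ℝ) : HasDerivAt stdNormalCDF (gaussDens x) x := by
  have key : stdNormalCDF = fun y => stdNormalCDF 0 + ∫ t in (0:ℝ)..y, gaussDens t := by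
    funext y
    have := intervalIntegral.integral_Iic_sub_Iic (gaussDens_integrable.integrableOn)
      (gaussDens_integrable.integrableOn) (a := 0) (b := y)
    simp only [stdNormalCDF, gaussDens] at this ⊢
    rw [← this]
    ring
  rw [key]
  exact ((hasDerivAt_const x (stdNormalCDF 0)).add
    (intervalIntegral.integral_hasDerivAt_right (a := 0)
      (gaussDens_integrable.intervalIntegrable)
      (gaussDens_cont.stronglyMeasurable.stronglyMeasurableAtFilter)
      gaussDens_cont.continuousAt)).congr_deriv (zero_add _)

lemma gaussDens_lt {u v : ℝ} (h : u ^ 2 < v ^ 2) : gaussDens v < gaussDens u := by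
  unfold gaussDens
  have hc : 0 < Real.sqrt (2 * Real.pi) := Real.sqrt_pos.mpr (by positivity)
  exact (div_lt_div_iff_of_pos_right hc).mpr (Real.exp_lt_exp.mpr (by linarith))

theorem stmt_1 (a s : ℝ) (ha : 0 < a) (hs : 0 < s)
    (f : ℝ → ℝ)
    (hf : ∀ β, f β = stdNormalCDF ((-a + β) / s) + stdNormalCDF ((-a - β) / s)) :
    StrictMonoOn f (Set.Ioi (0 : ℝ)) ∧ StrictAntiOn f (Set.Iio (0 : ℝ)) ∧
      ∀ β : ℝ, β ≠ 0 → f 0 < f β := by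
  set f' : ℝ → ℝ := fun β =>
    gaussDens ((-a + β) / s) * (1 / s) + gaussDens ((-a - β) / s) * (-(1 / s)) with hf'def
  have hderiv : ∀ β : ℝ, HasDerivAt f (f' β) β := by
    intro β
    have h1 : HasDerivAt (fun β : ℝ => (-a + β) / s) (1 / s) β := by
      simpa using ((hasDerivAt_id β).const_add (-a)).div_const s
    have h2 : HasDerivAt (fun β : ℝ => (-a - β) / s) (-(1 / s)) β := by
      have : HasDerivAt (fun β : ℝ => -a - β) (-1) β := by
        exact (hasDerivAt_id β).const_sub (-a)
      simpa [neg_div] using this.div_const s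
    have := ((hasDerivAt_cdf ((-a + β) / s)).comp β h1).add
      ((hasDerivAt_cdf ((-a - β) / s)).comp β h2)
    have heq : f = fun β => stdNormalCDF ((-a + β) / s) + stdNormalCDF ((-a - β) / s) :=
      funext hf
    rw [heq, hf'def]
    exact this
  have hdiff : Differentiable ℝ f := fun β => (hderiv β).differentiableAt
  have hderiveq : deriv f = f' := funext fun β => (hderiv β).deriv
  have hpos : ∀ β : ℝ, 0 < β → 0 < f' β := by
    intro β hβ
    have hsq : ((-a + β) / s) ^ 2 < ((-a - β) / s) ^ 2 := by
      rw [div_pow, div_pow]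
      exact (div_lt_div_iff_of_pos_right (by positivity)).mpr (by nlinarith)
    have := gaussDens_lt hsq
    have h1s : 0 < 1 / s := by positivity
    simp only [hf'def]
    nlinarith
  have hneg : ∀ β : ℝ, β < 0 → f' β < 0 := by
    intro β hβ
    have hsq : ((-a - β) / s) ^ 2 < ((-a + β) / s) ^ 2 := by
      rw [div_pow, div_pow]
      exact (div_lt_div_iff_of_pos_right (by positivity)).mpr (by nlinarith)
    have := gaussDens_lt hsq
    have h1s : 0 < 1 / s := by positivity
    simp only [hf'def]
    nlinarith
  have hmono : StrictMonoOn f (Set.Ici (0 : ℝ)) := by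
    apply strictMonoOn_of_deriv_pos (convex_Ici 0) hdiff.continuous.continuousOn
    intro x hx
    rw [interior_Ici] at hx
    rw [hderiveq]
    exact hpos x hx
  have hanti : StrictAntiOn f (Set.Iic (0 : ℝ)) := by
    apply strictAntiOn_of_deriv_neg (convex_Iic 0) hdiff.continuous.continuousOn
    intro x hx
    rw [interior_Iic] at hx
    rw [hderiveq]
    exact hneg x hx
  refine ⟨hmono.mono Set.Ioi_subset_Ici_self, hanti.mono Set.Iio_subset_Iic_self, ?_⟩
  intro β hβ
  rcases lt_or_gt_of_ne hβ with h | h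
  · exact hanti (Set.mem_Iic.mpr (le_of_lt h)) (Set.mem_Iic.mpr le_rfl) h
  · exact hmono (Set.mem_Ici.mpr le_rfl) (Set.mem_Ici.mpr (le_of_lt h)) h
end

section
/- Define h(β) = Φ(−√(nλ) − β·√(n c e^{β²/2})) + Φ(−√(nλ) + β·√(n c e^{β²/2})) for fixed constants n ≥ 1, λ > 0, c > 0. Then h is even, h'(β) > 0 for β > 0, h'(β) < 0 for β < 0, and h'(0) = 0; hence h is strictly increasing in |β| on all of ℝ. -/
open Real MeasureTheory Set

lemma phi_integrable : Integrable (fun t : ℝ => Real.exp (-t ^ 2 / 2) / Real.sqrt (2 * Real.pi)) := by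
  have : Integrable (fun t : ℝ => Real.exp (-(1/2 : ℝ) * t ^ 2)) :=
    integrable_exp_neg_mul_sq (by norm_num)
  have h2 := this.div_const (Real.sqrt (2 * Real.pi))
  convert h2 using 2 with t
  ring_nf

lemma hasDerivAt_stdNormalCDF (x : ℝ) :
    HasDerivAt stdNormalCDF (Real.exp (-x ^ 2 / 2) / Real.sqrt (2 * Real.pi)) x := by
  have hfun : stdNormalCDF = fun y =>
      stdNormalCDF 0 + ∫ t in (0:ℝ)..y, Real.exp (-t ^ 2 / 2) / Real.sqrt (2 * Real.pi) := by
    funext y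
    have key := intervalIntegral.integral_Iic_sub_Iic (μ := volume) (a := (0:ℝ)) (b := y)
      (f := fun t : ℝ => Real.exp (-t ^ 2 / 2) / Real.sqrt (2 * Real.pi))
      phi_integrable.integrableOn phi_integrable.integrableOn
    simp only [stdNormalCDF]
    linarith
  rw [hfun]
  have hcont : Continuous fun t : ℝ => Real.exp (-t ^ 2 / 2) / Real.sqrt (2 * Real.pi) := by
    continuity
  have := intervalIntegral.integral_hasDerivAt_right
    (phi_integrable.intervalIntegrable (a := 0) (b := x))
    (hcont.stronglyMeasurableAtFilter _ _) hcont.continuousAt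
  exact this.const_add _

theorem stmt_13 (n : ℕ) (hn : 1 ≤ n) (lam c : ℝ) (hlam : 0 < lam) (hc : 0 < c)
    (h : ℝ → ℝ)
    (hh : ∀ β, h β = stdNormalCDF (-Real.sqrt (n * lam)
          - β * Real.sqrt (n * c * Real.exp (β ^ 2 / 2)))
        + stdNormalCDF (-Real.sqrt (n * lam)
          + β * Real.sqrt (n * c * Real.exp (β ^ 2 / 2)))) :
    (∀ β, h β = h (-β)) ∧
      (∀ β : ℝ, 0 < β → 0 < deriv h β) ∧
      (∀ β : ℝ, β < 0 → deriv h β < 0) ∧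
      deriv h 0 = 0 ∧
      (∀ β₁ β₂ : ℝ, |β₁| < |β₂| → h β₁ < h β₂) := by
  have hn' : (0:ℝ) < n := by exact_mod_cast hn
  set a : ℝ := Real.sqrt (n * lam) with ha_def
  set s : ℝ := Real.sqrt (n * c) with hs_def
  have ha : 0 < a := Real.sqrt_pos.2 (by positivity)
  have hs : 0 < s := Real.sqrt_pos.2 (by positivity)
  -- factor the square root
  have sqrt_fact : ∀ β : ℝ, Real.sqrt (n * c * Real.exp (β ^ 2 / 2))
      = s * Real.exp (β ^ 2 / 4) := by
    intro β
    have he : Real.exp (β ^ 2 / 2) = (Real.exp (β ^ 2 / 4)) ^ 2 := by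
      rw [show (Real.exp (β ^ 2 / 4)) ^ 2 = Real.exp (β ^ 2 / 4) * Real.exp (β ^ 2 / 4) from sq _,
        ← Real.exp_add]
      congr 1; ring
    rw [he, Real.sqrt_mul (by positivity), Real.sqrt_sq (Real.exp_nonneg _)]
  -- rewrite h
  have hfun : h = fun β => stdNormalCDF (-a - β * (s * Real.exp (β ^ 2 / 4)))
      + stdNormalCDF (-a + β * (s * Real.exp (β ^ 2 / 4))) := by
    funext β
    rw [hh β, sqrt_fact β]
  -- g and its derivative
  set g : ℝ → ℝ := fun β => β * (s * Real.exp (β ^ 2 / 4)) with hg_def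
  have hg : ∀ β : ℝ, HasDerivAt g (s * Real.exp (β ^ 2 / 4) * (1 + β ^ 2 / 2)) β := by
    intro β
    have h1 : HasDerivAt (fun β : ℝ => β ^ 2 / 4) (β / 2) β := by
      have := (hasDerivAt_pow 2 β).div_const 4
      exact this.congr_deriv (by push_cast; ring)
    have h2 : HasDerivAt (fun β : ℝ => Real.exp (β ^ 2 / 4))
        (Real.exp (β ^ 2 / 4) * (β / 2)) β := h1.exp
    have h3 := (hasDerivAt_id β).mul (h2.const_mul s)
    refine h3.congr_deriv ?_
    simp only [id_eq]
    ring
  -- derivative of h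
  have hD : ∀ β : ℝ, HasDerivAt h
      ((s * Real.exp (β ^ 2 / 4) * (1 + β ^ 2 / 2)) *
        (Real.exp (-(-a + g β) ^ 2 / 2) / Real.sqrt (2 * Real.pi)
          - Real.exp (-(-a - g β) ^ 2 / 2) / Real.sqrt (2 * Real.pi))) β := by
    intro β
    have hu : HasDerivAt (fun β : ℝ => -a - g β)
        (-(s * Real.exp (β ^ 2 / 4) * (1 + β ^ 2 / 2))) β := (hg β).const_sub (-a)
    have hv : HasDerivAt (fun β : ℝ => -a + g β)
        (s * Real.exp (β ^ 2 / 4) * (1 + β ^ 2 / 2)) β := (hg β).const_add (-a)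
    have H1 := (hasDerivAt_stdNormalCDF (-a - g β)).comp β hu
    have H2 := (hasDerivAt_stdNormalCDF (-a + g β)).comp β hv
    rw [hfun]
    refine (H1.add H2).congr_deriv ?_
    ring
  have hdiff : ∀ β : ℝ, DifferentiableAt ℝ h β := fun β => (hD β).differentiableAt
  -- sign of the factor
  have hderiv : ∀ β : ℝ, deriv h β
      = (s * Real.exp (β ^ 2 / 4) * (1 + β ^ 2 / 2)) *
        (Real.exp (-(-a + g β) ^ 2 / 2) / Real.sqrt (2 * Real.pi)
          - Real.exp (-(-a - g β) ^ 2 / 2) / Real.sqrt (2 * Real.pi)) := fun β => (hD β).deriv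
  have hsqrtpi : 0 < Real.sqrt (2 * Real.pi) := Real.sqrt_pos.2 (by positivity)
  have hpos : ∀ β : ℝ, 0 < β → 0 < deriv h β := by
    intro β hβ
    rw [hderiv β]
    have hgpos : 0 < g β := by
      simp only [hg_def]; positivity
    have hfac : 0 < Real.exp (-(-a + g β) ^ 2 / 2) / Real.sqrt (2 * Real.pi)
        - Real.exp (-(-a - g β) ^ 2 / 2) / Real.sqrt (2 * Real.pi) := by
      rw [sub_pos, div_lt_div_iff_of_pos_right hsqrtpi]
      apply Real.exp_lt_exp.2
      nlinarith [mul_pos ha hgpos]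
    positivity
  have hneg : ∀ β : ℝ, β < 0 → deriv h β < 0 := by
    intro β hβ
    rw [hderiv β]
    have hgneg : g β < 0 := by
      simp only [hg_def]
      have : 0 < s * Real.exp (β ^ 2 / 4) := by positivity
      exact mul_neg_of_neg_of_pos hβ this
    have hfac : Real.exp (-(-a + g β) ^ 2 / 2) / Real.sqrt (2 * Real.pi)
        - Real.exp (-(-a - g β) ^ 2 / 2) / Real.sqrt (2 * Real.pi) < 0 := by
      rw [sub_neg, div_lt_div_iff_of_pos_right hsqrtpi]
      apply Real.exp_lt_exp.2
      nlinarith [mul_neg_of_pos_of_neg ha hgneg]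
    have hG : 0 < s * Real.exp (β ^ 2 / 4) * (1 + β ^ 2 / 2) := by positivity
    exact mul_neg_of_pos_of_neg hG hfac
  have hzero : deriv h 0 = 0 := by
    rw [hderiv 0]
    have : g 0 = 0 := by simp [hg_def]
    rw [this]
    ring
  have heven : ∀ β : ℝ, h β = h (-β) := by
    intro β
    rw [hh β, hh (-β)]
    simp only [neg_sq, neg_mul]
    rw [sub_neg_eq_add, ← sub_eq_add_neg, add_comm]
  have hmono : StrictMonoOn h (Set.Ici (0:ℝ)) := by
    apply strictMonoOn_of_deriv_pos (convex_Ici 0)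
      (fun β _ => (hdiff β).continuousAt.continuousWithinAt)
    intro β hβ
    rw [interior_Ici] at hβ
    exact hpos β hβ
  refine ⟨heven, hpos, hneg, hzero, ?_⟩
  intro β₁ β₂ hlt
  have habs : ∀ β : ℝ, h β = h |β| := by
    intro β
    rcases abs_cases β with ⟨he, _⟩ | ⟨he, _⟩
    · rw [he]
    · rw [he, ← heven β]
  rw [habs β₁, habs β₂]
  exact hmono (abs_nonneg β₁) (abs_nonneg β₂) hlt
end
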